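/- Let H be a finite group of odd order and let y, v ∈ H and u ∈ Z/2. If the set {(0,y), (1,e), (u,v)} generates Z/2 × H (where e is the identity of H and Z/2 is written additively), then the set {(0,y), (1,v)} generates Z/2 × H. -/

import Mathlib

theorem generating_pair_from_triple (H : Type) [Group H] [Fintype H]
    (hH : Odd (Fintype.card H)) (y v : H) (u : ZMod 2)
    (hgen : Subgroup.closure
        ({(Multiplicative.ofAdd (0 : ZMod 2), y), (Multiplicative.ofAdd (1 : ZMod 2), (1 : H)),
          (Multiplicative.ofAdd u, v)} : Set (Multiplicative (ZMod 2) × H)) = ⊤) :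
    Subgroup.closure
        ({(Multiplicative.ofAdd (0 : ZMod 2), y), (Multiplicative.ofAdd (1 : ZMod 2), v)} :
          Set (Multiplicative (ZMod 2) × H)) = ⊤ := by
  rw [eq_top_iff, ← hgen, Subgroup.closure_le]
  set K := Subgroup.closure
        ({(Multiplicative.ofAdd (0 : ZMod 2), y), (Multiplicative.ofAdd (1 : ZMod 2), v)} :
          Set (Multiplicative (ZMod 2) × H)) with hK
  have hy : (Multiplicative.ofAdd (0:ZMod 2), y) ∈ K := Subgroup.subset_closure (by simp)
  have h1v : (Multiplicative.ofAdd (1:ZMod 2), v) ∈ K := Subgroup.subset_closure (by simp)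
  have hodd : Odd (orderOf v) := by
    have h := orderOf_dvd_card (x := v)
    rw [← Nat.not_even_iff_odd] at hH ⊢
    intro he
    exact hH (even_iff_two_dvd.mpr ((even_iff_two_dvd.mp he).trans h))
  obtain ⟨m, hm⟩ := hodd
  have hv2 : (Multiplicative.ofAdd (0:ZMod 2), v^2) ∈ K := by
    have h := K.mul_mem h1v h1v
    have : (Multiplicative.ofAdd (1:ZMod 2), v) * (Multiplicative.ofAdd (1:ZMod 2), v)
        = (Multiplicative.ofAdd (0:ZMod 2), v^2) := by
      refine Prod.ext ?_ ?_
      · show Multiplicative.ofAdd (1:ZMod 2) * Multiplicative.ofAdd (1:ZMod 2)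
            = Multiplicative.ofAdd (0:ZMod 2)
        decide
      · exact (sq v).symm
    rwa [this] at h
  have h0v : (Multiplicative.ofAdd (0:ZMod 2), v) ∈ K := by
    have h := K.pow_mem hv2 (m+1)
    have : (Multiplicative.ofAdd (0:ZMod 2), v^2) ^ (m+1)
        = (Multiplicative.ofAdd (0:ZMod 2), v) := by
      ext
      · show (Multiplicative.ofAdd (0:ZMod 2)) ^ (m+1) = Multiplicative.ofAdd (0:ZMod 2)
        rw [ofAdd_zero, one_pow]
      · show (v^2)^(m+1) = v
        rw [← pow_mul]
        have : 2 * (m+1) = orderOf v + 1 := by omega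
        rw [this, pow_succ, pow_orderOf_eq_one, one_mul]
    rwa [this] at h
  have h1e : (Multiplicative.ofAdd (1:ZMod 2), (1:H)) ∈ K := by
    have h := K.mul_mem h1v (K.inv_mem h0v)
    have : (Multiplicative.ofAdd (1:ZMod 2), v) * (Multiplicative.ofAdd (0:ZMod 2), v)⁻¹
        = (Multiplicative.ofAdd (1:ZMod 2), (1:H)) := by
      refine Prod.ext ?_ ?_
      · show Multiplicative.ofAdd (1:ZMod 2) * (Multiplicative.ofAdd (0:ZMod 2))⁻¹
            = Multiplicative.ofAdd (1:ZMod 2)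
        decide
      · simp
    rwa [this] at h
  have huv : (Multiplicative.ofAdd u, v) ∈ K := by
    fin_cases u
    · exact h0v
    · exact h1v
  intro x hx
  simp only [Set.mem_insert_iff, Set.mem_singleton_iff] at hx
  rcases hx with rfl | rfl | rfl
  · exact hy
  · exact h1e
  · exact huv
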